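/- Conversely to the penalized PCA-covariance equivalence: if L̂ minimizes (1/2) d_*(X^T X, L L^T)^2 + Σ_k P_k(l_k) over L ∈ ℝ^{P×K}, and Ẑ := Polar.U(X L̂), then (Ẑ, L̂) minimizes (1/2)||X - Z L^T||_F^2 + Σ_k P_k(l_k) over all Z with Z^T Z = I_K and L ∈ ℝ^{P×K}. -/

import Mathlib

open Matrix

noncomputable def frobSq {n p : ℕ} (A : Matrix (Fin n) (Fin p) ℝ) : ℝ := ∑ i, ∑ j, (A i j)^2

open Classical in
/-- The unique positive semidefinite square root of a PSD matrix (junk value `0` otherwise). -/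
noncomputable def msqrt {p : ℕ} (M : Matrix (Fin p) (Fin p) ℝ) : Matrix (Fin p) (Fin p) ℝ :=
  if h : M.PosSemidef then
    (h.1.eigenvectorUnitary : Matrix (Fin p) (Fin p) ℝ) *
      Matrix.diagonal (Real.sqrt ∘ h.1.eigenvalues) *
      (star h.1.eigenvectorUnitary : Matrix (Fin p) (Fin p) ℝ)
  else 0

/-- Squared Bures-Wasserstein distance. -/
noncomputable def BWsq {p : ℕ} (A B : Matrix (Fin p) (Fin p) ℝ) : ℝ :=
  A.trace - 2 * (msqrt (msqrt A * B * msqrt A)).trace + B.trace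

lemma star_eq_t {k : ℕ} (Q : Matrix (Fin k) (Fin k) ℝ) : star Q = Qᵀ := by
  rw [Matrix.star_eq_conjTranspose, Matrix.conjTranspose_eq_transpose_of_trivial]

lemma psd_transpose_eq {k : ℕ} {M : Matrix (Fin k) (Fin k) ℝ} (h : M.PosSemidef) : Mᵀ = M := by
  have := h.1
  rwa [Matrix.IsHermitian, Matrix.conjTranspose_eq_transpose_of_trivial] at this

open scoped MatrixOrder in
lemma msqrt_cfc {k : ℕ} {M : Matrix (Fin k) (Fin k) ℝ} (h : M.PosSemidef) :
    msqrt M = CFC.sqrt M := by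
  unfold msqrt
  rw [dif_pos h, CFC.sqrt_eq_real_sqrt M h.nonneg, cfcₙ_eq_cfc, h.1.cfc_eq]
  simp [Matrix.IsHermitian.cfc, Unitary.conjStarAlgAut_apply, Function.comp_def]

open scoped MatrixOrder in
lemma msqrt_eq {k : ℕ} {M R : Matrix (Fin k) (Fin k) ℝ} (hR : R.PosSemidef)
    (hRM : R * R = M) : msqrt M = R := by
  have hM : M.PosSemidef := by rw [← hRM, ← pow_two]; exact hR.pow 2
  rw [msqrt_cfc hM]
  exact CFC.sqrt_unique hRM hR.nonneg

lemma msqrt_posSemidef {k : ℕ} {M : Matrix (Fin k) (Fin k) ℝ} (h : M.PosSemidef) :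
    (msqrt M).PosSemidef := by
  open scoped MatrixOrder in
  rw [msqrt_cfc h]; exact Matrix.nonneg_iff_posSemidef.mp (CFC.sqrt_nonneg M)

lemma msqrt_mul_self {k : ℕ} {M : Matrix (Fin k) (Fin k) ℝ} (h : M.PosSemidef) :
    msqrt M * msqrt M = M := by
  open scoped MatrixOrder in
  rw [msqrt_cfc h]; exact CFC.sqrt_mul_sqrt_self M h.nonneg

lemma spectral_psd {k : ℕ} {M : Matrix (Fin k) (Fin k) ℝ} (h : M.PosSemidef) :
    ∃ (Q : Matrix (Fin k) (Fin k) ℝ) (e : Fin k → ℝ),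
      (∀ i, 0 ≤ e i) ∧ Qᵀ * Q = 1 ∧ Q * Qᵀ = 1 ∧
      M = Q * Matrix.diagonal e * Qᵀ ∧
      (msqrt M).trace = ∑ i, Real.sqrt (e i) := by
  refine ⟨h.1.eigenvectorUnitary, h.1.eigenvalues, h.eigenvalues_nonneg, ?_, ?_, ?_, ?_⟩
  · rw [← star_eq_t]
    exact Matrix.mem_unitaryGroup_iff'.mp h.1.eigenvectorUnitary.2
  · rw [← star_eq_t]
    exact Matrix.mem_unitaryGroup_iff.mp h.1.eigenvectorUnitary.2
  · have := h.1.spectral_theorem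
    simpa [Unitary.conjStarAlgAut_apply, star_eq_t, Function.comp_def] using this
  · unfold msqrt
    rw [dif_pos h]
    rw [Matrix.trace_mul_cycle, Matrix.mem_unitaryGroup_iff'.mp h.1.eigenvectorUnitary.2,
      one_mul, Matrix.trace_diagonal]
    simp [Function.comp]

lemma dot_le_sqrt {n : ℕ} (u v : Fin n → ℝ) :
    u ⬝ᵥ v ≤ Real.sqrt (u ⬝ᵥ u) * Real.sqrt (v ⬝ᵥ v) := by
  have hsq : (u ⬝ᵥ v)^2 ≤ (u ⬝ᵥ u) * (v ⬝ᵥ v) := by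
    have := Finset.sum_mul_sq_le_sq_mul_sq Finset.univ u v
    simpa [dotProduct, sq] using this
  calc u ⬝ᵥ v ≤ |u ⬝ᵥ v| := le_abs_self _
    _ = Real.sqrt ((u ⬝ᵥ v)^2) := (Real.sqrt_sq_eq_abs _).symm
    _ ≤ Real.sqrt ((u ⬝ᵥ u) * (v ⬝ᵥ v)) := Real.sqrt_le_sqrt hsq
    _ = _ := Real.sqrt_mul (Finset.sum_nonneg fun i _ => mul_self_nonneg _) _

lemma dot_mulVec_pair {n k : ℕ} (Z B : Matrix (Fin n) (Fin k) ℝ) (q : Fin k → ℝ) :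
    (Z *ᵥ q) ⬝ᵥ (B *ᵥ q) = q ⬝ᵥ ((Zᵀ * B) *ᵥ q) := by
  simp only [dotProduct, Matrix.mulVec, Matrix.mul_apply, Matrix.transpose_apply,
    Finset.sum_mul, Finset.mul_sum, dotProduct]
  calc ∑ m, ∑ b, ∑ a, Z m a * q a * (B m b * q b)
      = ∑ m, ∑ a, ∑ b, Z m a * q a * (B m b * q b) :=
        Finset.sum_congr rfl fun m _ => Finset.sum_comm
    _ = ∑ a, ∑ m, ∑ b, Z m a * q a * (B m b * q b) := Finset.sum_comm
    _ = ∑ a, ∑ b, ∑ m, Z m a * q a * (B m b * q b) :=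
        Finset.sum_congr rfl fun a _ => Finset.sum_comm
    _ = ∑ a, ∑ b, ∑ m, q a * (Z m a * B m b * q b) :=
        Finset.sum_congr rfl fun a _ => Finset.sum_congr rfl fun b _ =>
          Finset.sum_congr rfl fun m _ => by ring

lemma conj_diag_entry {k : ℕ} (W Q : Matrix (Fin k) (Fin k) ℝ) (i : Fin k) :
    (Qᵀ * W * Q) i i = (fun a => Q a i) ⬝ᵥ (W *ᵥ (fun a => Q a i)) := by
  simp only [Matrix.mul_apply, Matrix.transpose_apply, dotProduct, Matrix.mulVec,
    dotProduct, Finset.sum_mul, Finset.mul_sum]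
  rw [Finset.sum_comm]
  congr 1; ext a; congr 1; ext b; ring

lemma trace_le_trace_msqrt {n k : ℕ} (B Z : Matrix (Fin n) (Fin k) ℝ) (hZ : Zᵀ * Z = 1) :
    (Zᵀ * B).trace ≤ (msqrt (Bᵀ * B)).trace := by
  have hM : (Bᵀ * B).PosSemidef := by
    have := Matrix.posSemidef_conjTranspose_mul_self B
    rwa [Matrix.conjTranspose_eq_transpose_of_trivial] at this
  obtain ⟨Q, e, he, hQtQ, hQQt, hMdec, htr⟩ := spectral_psd hM
  rw [htr]
  have htr2 : (Zᵀ * B).trace = (Qᵀ * (Zᵀ * B) * Q).trace := by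
    rw [Matrix.trace_mul_cycle, ← Matrix.mul_assoc, hQQt, Matrix.one_mul]
  rw [htr2, Matrix.trace]
  apply Finset.sum_le_sum
  intro i _
  rw [Matrix.diag]
  rw [conj_diag_entry]
  set q : Fin k → ℝ := fun a => Q a i with hq
  have hZq : (Z *ᵥ q) ⬝ᵥ (Z *ᵥ q) = 1 := by
    rw [dot_mulVec_pair, hZ, Matrix.one_mulVec]
    have : q ⬝ᵥ q = (Qᵀ * Q) i i := by
      simp [Matrix.mul_apply, dotProduct, hq]
    rw [this, hQtQ, Matrix.one_apply_eq]
  have hBq : (B *ᵥ q) ⬝ᵥ (B *ᵥ q) = e i := by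
    rw [dot_mulVec_pair, ← conj_diag_entry (Bᵀ * B) Q i, hMdec]
    have : Qᵀ * (Q * Matrix.diagonal e * Qᵀ) * Q
        = Matrix.diagonal e := by
      rw [← Matrix.mul_assoc, ← Matrix.mul_assoc, hQtQ, one_mul, Matrix.mul_assoc, hQtQ, mul_one]
    rw [this, Matrix.diagonal_apply_eq]
  rw [← dot_mulVec_pair]
  calc (Z *ᵥ q) ⬝ᵥ (B *ᵥ q)
      ≤ Real.sqrt ((Z *ᵥ q) ⬝ᵥ (Z *ᵥ q)) * Real.sqrt ((B *ᵥ q) ⬝ᵥ (B *ᵥ q)) := dot_le_sqrt _ _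
    _ = Real.sqrt (e i) := by rw [hZq, hBq, Real.sqrt_one, one_mul]

lemma trace_msqrt_comm {p k : ℕ} (C : Matrix (Fin p) (Fin k) ℝ) :
    (msqrt (Cᵀ * C)).trace = (msqrt (C * Cᵀ)).trace := by
  have hM : (Cᵀ * C).PosSemidef := by
    have := Matrix.posSemidef_conjTranspose_mul_self C
    rwa [Matrix.conjTranspose_eq_transpose_of_trivial] at this
  obtain ⟨Q, e, he, hQtQ, hQQt, hMdec, htr⟩ := spectral_psd hM
  rw [htr]
  set W : Matrix (Fin p) (Fin k) ℝ := C * Q with hW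
  have hWtW : Wᵀ * W = Matrix.diagonal e := by
    rw [hW, Matrix.transpose_mul, Matrix.mul_assoc, ← Matrix.mul_assoc Cᵀ C Q, hMdec]
    rw [Matrix.mul_assoc (Q * Matrix.diagonal e) Qᵀ Q, hQtQ, Matrix.mul_one,
      ← Matrix.mul_assoc, hQtQ, Matrix.one_mul]
  set g : Fin k → ℝ := fun i => if e i = 0 then 0 else (Real.sqrt (e i))⁻¹ with hg
  have hg0 : ∀ i, 0 ≤ g i := by
    intro i; rw [hg]; dsimp only
    split
    · exact le_refl 0
    · exact inv_nonneg.mpr (Real.sqrt_nonneg _)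
  set R : Matrix (Fin p) (Fin p) ℝ := W * Matrix.diagonal g * Wᵀ with hR
  have hRpsd : R.PosSemidef := by
    have hdg : (Matrix.diagonal g).PosSemidef := Matrix.posSemidef_diagonal_iff.mpr hg0
    have := hdg.mul_mul_conjTranspose_same W
    rwa [Matrix.conjTranspose_eq_transpose_of_trivial] at this
  -- columns of W with e i = 0 vanish
  have hWcol : ∀ i, e i = 0 → ∀ a, W a i = 0 := by
    intro i hei a
    have hsum : ∑ a, W a i * W a i = e i := by
      have : (Wᵀ * W) i i = Matrix.diagonal e i i := by rw [hWtW]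
      simpa [Matrix.mul_apply, Matrix.diagonal_apply_eq] using this
    have hz : ∑ a, W a i * W a i = 0 := by rw [hsum, hei]
    have := (Finset.sum_eq_zero_iff_of_nonneg (fun a _ => mul_self_nonneg (W a i))).mp hz
      a (Finset.mem_univ a)
    exact mul_self_eq_zero.mp this
  have hWE : W * Matrix.diagonal (fun i => g i * e i * g i) = W := by
    ext a i
    rw [Matrix.mul_diagonal]
    by_cases hei : e i = 0
    · rw [hWcol i hei a, zero_mul]
    · rw [hg]; dsimp only
      rw [if_neg hei]
      have hsp : Real.sqrt (e i) ≠ 0 :=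
        Real.sqrt_ne_zero'.mpr (lt_of_le_of_ne (he i) (Ne.symm hei))
      have : (Real.sqrt (e i))⁻¹ * e i * (Real.sqrt (e i))⁻¹ = 1 := by
        have h2 : Real.sqrt (e i) * Real.sqrt (e i) = e i := Real.mul_self_sqrt (he i)
        field_simp
        exact (Real.sq_sqrt (he i)).symm
      rw [this, mul_one]
  have hRR : R * R = C * Cᵀ := by
    rw [hR]
    have h1 : W * Matrix.diagonal g * Wᵀ * (W * Matrix.diagonal g * Wᵀ)
        = W * (Matrix.diagonal g * (Wᵀ * W) * Matrix.diagonal g) * Wᵀ := by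
      simp only [Matrix.mul_assoc]
    rw [h1, hWtW, Matrix.diagonal_mul_diagonal, Matrix.diagonal_mul_diagonal, hWE]
    rw [hW, Matrix.transpose_mul, Matrix.mul_assoc, ← Matrix.mul_assoc Q Qᵀ Cᵀ, hQQt, Matrix.one_mul]
  rw [msqrt_eq hRpsd hRR, hR]
  rw [Matrix.trace_mul_cycle, hWtW, Matrix.diagonal_mul_diagonal, Matrix.trace_diagonal]
  refine Finset.sum_congr rfl fun i _ => ?_
  rw [hg]; dsimp only
  by_cases hei : e i = 0
  · rw [if_pos hei, hei, mul_zero, Real.sqrt_zero]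
  · rw [if_neg hei]
    have hsp : Real.sqrt (e i) ≠ 0 :=
      Real.sqrt_ne_zero'.mpr (lt_of_le_of_ne (he i) (Ne.symm hei))
    field_simp
    exact Real.sq_sqrt (he i)

lemma frobSq_eq_trace {n p : ℕ} (A : Matrix (Fin n) (Fin p) ℝ) : frobSq A = (Aᵀ * A).trace := by
  simp only [frobSq, Matrix.trace, Matrix.diag, Matrix.mul_apply, Matrix.transpose_apply, pow_two]
  exact Finset.sum_comm

lemma frob_expand {n p k : ℕ} (X : Matrix (Fin n) (Fin p) ℝ) (Z : Matrix (Fin n) (Fin k) ℝ)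
    (L : Matrix (Fin p) (Fin k) ℝ) (hZ : Zᵀ * Z = 1) :
    frobSq (X - Z * Lᵀ) = (Xᵀ * X).trace + (L * Lᵀ).trace - 2 * (Zᵀ * (X * L)).trace := by
  rw [frobSq_eq_trace, Matrix.transpose_sub, Matrix.sub_mul, Matrix.mul_sub, Matrix.mul_sub,
    Matrix.transpose_mul, Matrix.transpose_transpose, Matrix.trace_sub, Matrix.trace_sub,
    Matrix.trace_sub]
  have h3 : ((L * Zᵀ) * X).trace = (Zᵀ * (X * L)).trace := by
    rw [Matrix.mul_assoc, Matrix.trace_mul_comm, Matrix.mul_assoc]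
  have h2 : (Xᵀ * (Z * Lᵀ)).trace = (Zᵀ * (X * L)).trace := by
    rw [← Matrix.trace_transpose, Matrix.transpose_mul, Matrix.transpose_mul,
      Matrix.transpose_transpose, Matrix.transpose_transpose]
    exact h3
  have h4 : ((L * Zᵀ) * (Z * Lᵀ)).trace = (L * Lᵀ).trace := by
    rw [Matrix.mul_assoc, ← Matrix.mul_assoc Zᵀ Z Lᵀ, hZ, Matrix.one_mul]
  rw [h2, h3, h4]
  ring

lemma BW_expand {n p k : ℕ} (X : Matrix (Fin n) (Fin p) ℝ) (L : Matrix (Fin p) (Fin k) ℝ) :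
    BWsq (Xᵀ * X) (L * Lᵀ)
      = (Xᵀ * X).trace + (L * Lᵀ).trace - 2 * (msqrt ((X * L)ᵀ * (X * L))).trace := by
  have hA : (Xᵀ * X).PosSemidef := by
    have := Matrix.posSemidef_conjTranspose_mul_self X
    rwa [Matrix.conjTranspose_eq_transpose_of_trivial] at this
  have hS := msqrt_posSemidef hA
  have hSt : (msqrt (Xᵀ * X))ᵀ = msqrt (Xᵀ * X) := psd_transpose_eq hS
  have hSS : msqrt (Xᵀ * X) * msqrt (Xᵀ * X) = Xᵀ * X := msqrt_mul_self hA
  set S := msqrt (Xᵀ * X) with hSdef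
  have hmid : S * (L * Lᵀ) * S = (S * L) * (S * L)ᵀ := by
    rw [Matrix.transpose_mul, hSt]
    simp only [Matrix.mul_assoc]
  have key : (msqrt (S * (L * Lᵀ) * S)).trace = (msqrt ((X * L)ᵀ * (X * L))).trace := by
    rw [hmid, ← trace_msqrt_comm]
    congr 2
    rw [Matrix.transpose_mul, hSt, Matrix.transpose_mul]
    rw [Matrix.mul_assoc, Matrix.mul_assoc, ← Matrix.mul_assoc S S L, hSS,
      ← Matrix.mul_assoc Xᵀ X L]
  unfold BWsq
  rw [key]
  ring

/-- Conversely: if `L̂` minimizes the penalized covariance decomposition criterion, and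
`Ẑ = U Vᵀ` is the U factor of the polar decomposition of `X L̂` (given via an SVD
`X L̂ = U diagonal d Vᵀ`), then `(Ẑ, L̂)` minimizes the penalized PCA criterion. -/
theorem stmt9 {N P K : ℕ} (hKN : K ≤ N) (hKP : K ≤ P)
    (X : Matrix (Fin N) (Fin P) ℝ)
    (pen : Fin K → (Fin P → ℝ) → ℝ)
    (Lhat : Matrix (Fin P) (Fin K) ℝ)
    (hmin : ∀ L : Matrix (Fin P) (Fin K) ℝ,
      (1/2) * BWsq (X.transpose * X) (Lhat * Lhat.transpose) + ∑ k, pen k (fun p => Lhat p k)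
        ≤ (1/2) * BWsq (X.transpose * X) (L * L.transpose) + ∑ k, pen k (fun p => L p k))
    (U : Matrix (Fin N) (Fin K) ℝ) (V : Matrix (Fin K) (Fin K) ℝ) (d : Fin K → ℝ)
    (hU : U.transpose * U = 1)
    (hV : V.transpose * V = 1) (hV' : V * V.transpose = 1)
    (hd : ∀ i, 0 ≤ d i)
    (hSVD : X * Lhat = U * Matrix.diagonal d * V.transpose) :
    ((U * V.transpose).transpose * (U * V.transpose) = 1) ∧
    ∀ (Z : Matrix (Fin N) (Fin K) ℝ) (L : Matrix (Fin P) (Fin K) ℝ),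
      Z.transpose * Z = 1 →
      (1/2) * frobSq (X - (U * V.transpose) * Lhat.transpose) + ∑ k, pen k (fun p => Lhat p k)
        ≤ (1/2) * frobSq (X - Z * L.transpose) + ∑ k, pen k (fun p => L p k) := by
  have hUV1 : (U * Vᵀ)ᵀ * (U * Vᵀ) = 1 := by
    rw [Matrix.transpose_mul, Matrix.transpose_transpose]
    simp only [Matrix.mul_assoc]
    rw [← Matrix.mul_assoc Uᵀ U Vᵀ, hU, Matrix.one_mul, hV']
  refine ⟨hUV1, ?_⟩
  intro Z L hZ
  -- the matrix R = V * diagonal d * Vᵀ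
  set R : Matrix (Fin K) (Fin K) ℝ := V * Matrix.diagonal d * Vᵀ with hRdef
  have hRpsd : R.PosSemidef := by
    have hdg : (Matrix.diagonal d).PosSemidef := Matrix.posSemidef_diagonal_iff.mpr hd
    have := hdg.mul_mul_conjTranspose_same V
    rwa [Matrix.conjTranspose_eq_transpose_of_trivial] at this
  have hRR : R * R = (X * Lhat)ᵀ * (X * Lhat) := by
    rw [hRdef, hSVD, Matrix.transpose_mul, Matrix.transpose_mul, Matrix.diagonal_transpose,
      Matrix.transpose_transpose]
    simp only [Matrix.mul_assoc]
    rw [← Matrix.mul_assoc Vᵀ V, hV, ← Matrix.mul_assoc Uᵀ U, hU, Matrix.one_mul]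
  have hmsq : msqrt ((X * Lhat)ᵀ * (X * Lhat)) = R := msqrt_eq hRpsd hRR
  have hZB : (U * Vᵀ)ᵀ * (X * Lhat) = R := by
    rw [hRdef, hSVD, Matrix.transpose_mul, Matrix.transpose_transpose]
    simp only [Matrix.mul_assoc]
    rw [← Matrix.mul_assoc Uᵀ U, hU, Matrix.one_mul]
  have heq : frobSq (X - (U * Vᵀ) * Lhatᵀ) = BWsq (Xᵀ * X) (Lhat * Lhatᵀ) := by
    rw [frob_expand X (U * Vᵀ) Lhat hUV1, BW_expand X Lhat, hmsq, hZB]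
  have hineq : BWsq (Xᵀ * X) (L * Lᵀ) ≤ frobSq (X - Z * Lᵀ) := by
    rw [frob_expand X Z L hZ, BW_expand X L]
    have := trace_le_trace_msqrt (X * L) Z hZ
    linarith
  have h := hmin L
  linarith
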